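/- For α ∈ (0,1], ω ∈ ℝ, and s > 0, the conformable Laplace transform of f(t) = sin(ω t^α/α) is ω/(ω² + s²), and of g(t) = cos(ω t^α/α) is s/(ω² + s²). -/

import Mathlib

open MeasureTheory Set Filter Real

lemma integrable_cexp_mul {c : ℂ} (hc : c.re < 0) :
    IntegrableOn (fun x : ℝ => Complex.exp (c * x)) (Ioi 0) := by
  apply Integrable.mono' ((exp_neg_integrableOn_Ioi 0 (by linarith : (0:ℝ) < -c.re)))
  · exact (Complex.continuous_exp.comp (by continuity)).aestronglyMeasurable
  · filter_upwards with x
    simp [Complex.norm_exp, neg_mul, Complex.mul_re]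

lemma integral_cexp_mul_Ioi {c : ℂ} (hc : c.re < 0) :
    ∫ x in Ioi (0:ℝ), Complex.exp (c * x) = -1 / c := by
  have hc0 : c ≠ 0 := fun h => by simp [h] at hc
  have := integral_Ioi_of_hasDerivAt_of_tendsto
    (f := fun x : ℝ => Complex.exp (c * x) / c) (f' := fun x : ℝ => Complex.exp (c * x))
    (a := (0:ℝ)) (m := 0) ?_ ?_ (integrable_cexp_mul hc) ?_
  · simpa [neg_div] using this
  · exact (Continuous.div_const (Complex.continuous_exp.comp (by continuity)) c).continuousWithinAt
  · intro x _
    have h1 : HasDerivAt (fun x : ℝ => Complex.exp (c * x)) (Complex.exp (c * x) * (c * 1)) x :=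
      ((Complex.ofRealCLM.hasDerivAt.const_mul c)).cexp
    simpa [mul_comm, mul_div_cancel_left₀ _ hc0] using h1.div_const c
  · rw [tendsto_zero_iff_norm_tendsto_zero]
    have : Tendsto (fun x : ℝ => Real.exp (c.re * x) / ‖c‖) atTop (nhds 0) := by
      have h := (Real.tendsto_exp_atBot.comp
        (tendsto_id.const_mul_atTop_of_neg hc)).div_const (‖c‖)
      simpa using h
    refine this.congr fun x => ?_
    simp [Complex.norm_exp, Complex.mul_re, map_div₀, Complex.norm_real]

lemma laplace_sin_cos {a : ℝ} (ha : 0 < a) (b : ℝ) :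
    (∫ x in Ioi (0:ℝ), Real.exp (-a * x) * Real.sin (b * x) = b / (a ^ 2 + b ^ 2)) ∧
    (∫ x in Ioi (0:ℝ), Real.exp (-a * x) * Real.cos (b * x) = a / (a ^ 2 + b ^ 2)) := by
  set c : ℂ := -a + b * Complex.I with hc
  have hcre : c.re = -a := by simp [hc]
  have hcim : c.im = b := by simp [hc]
  have hcre' : c.re < 0 := by rw [hcre]; linarith
  have hint := integrable_cexp_mul hcre'
  have key := integral_cexp_mul_Ioi hcre'
  have hre := integral_re hint
  have him := integral_im hint
  simp only [RCLike.re_to_complex, RCLike.im_to_complex] at hre him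
  rw [key] at hre him
  have hcongr : ∀ x ∈ Ioi (0:ℝ),
      (Complex.exp (c * x)).re = Real.exp (-a * x) * Real.cos (b * x) ∧
      (Complex.exp (c * x)).im = Real.exp (-a * x) * Real.sin (b * x) := by
    intro x _
    constructor <;> simp [Complex.exp_re, Complex.exp_im, Complex.mul_re, Complex.mul_im,
      hcre, hcim, neg_mul]
  have hsq : Complex.normSq c = a ^ 2 + b ^ 2 := by
    simp [Complex.normSq_apply, hcre, hcim]; ring
  have hre2 : (-1 / c).re = a / (a ^ 2 + b ^ 2) := by
    simp [Complex.div_re, hcre, hcim, hsq]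
  have him2 : (-1 / c).im = b / (a ^ 2 + b ^ 2) := by
    simp [Complex.div_im, hcre, hcim, hsq]
    ring
  constructor
  · rw [← him2, ← him]
    exact setIntegral_congr_fun measurableSet_Ioi (fun x hx => (hcongr x hx).2.symm)
  · rw [← hre2, ← hre]
    exact setIntegral_congr_fun measurableSet_Ioi (fun x hx => (hcongr x hx).1.symm)

/-- Conformable Laplace transforms of `sin(ω t^α/α)` and `cos(ω t^α/α)`. -/
theorem conformable_laplace_sin_cos (α : ℝ) (hα0 : 0 < α) (hα1 : α ≤ 1)
    (ω : ℝ) (s : ℝ) (hs : 0 < s) :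
    (∫ t in Set.Ioi (0 : ℝ),
        Real.exp (-s * t ^ α / α) * Real.sin (ω * t ^ α / α) * t ^ (α - 1)
      = ω / (ω ^ 2 + s ^ 2)) ∧
    (∫ t in Set.Ioi (0 : ℝ),
        Real.exp (-s * t ^ α / α) * Real.cos (ω * t ^ α / α) * t ^ (α - 1)
      = s / (ω ^ 2 + s ^ 2)) := by
  have hα : α ≠ 0 := hα0.ne'
  have ha : 0 < s / α := div_pos hs hα0
  obtain ⟨hsin, hcos⟩ := laplace_sin_cos ha (ω / α)
  have hne : ω ^ 2 + s ^ 2 ≠ 0 := by positivity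
  have harith : (s / α) ^ 2 + (ω / α) ^ 2 = (ω ^ 2 + s ^ 2) / α ^ 2 := by
    field_simp; ring
  constructor
  · have key := integral_comp_rpow_Ioi_of_pos
      (g := fun u => (1 / α) * (Real.exp (-(s / α) * u) * Real.sin ((ω / α) * u))) hα0
    simp only [integral_const_mul] at key
    rw [hsin] at key
    rw [show ω / (ω ^ 2 + s ^ 2) = 1 / α * (ω / α / ((s / α) ^ 2 + (ω / α) ^ 2)) by
      rw [harith]; field_simp, ← key]
    refine setIntegral_congr_fun measurableSet_Ioi fun t ht => ?_
    rw [smul_eq_mul]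
    have h1 : -(s / α) * t ^ α = -s * t ^ α / α := by ring
    have h2 : (ω / α) * t ^ α = ω * t ^ α / α := by ring
    rw [h1, h2]; field_simp
  · have key := integral_comp_rpow_Ioi_of_pos
      (g := fun u => (1 / α) * (Real.exp (-(s / α) * u) * Real.cos ((ω / α) * u))) hα0
    simp only [integral_const_mul] at key
    rw [hcos] at key
    rw [show s / (ω ^ 2 + s ^ 2) = 1 / α * (s / α / ((s / α) ^ 2 + (ω / α) ^ 2)) by
      rw [harith]; field_simp, ← key]
    refine setIntegral_congr_fun measurableSet_Ioi fun t ht => ?_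
    rw [smul_eq_mul]
    have h1 : -(s / α) * t ^ α = -s * t ^ α / α := by ring
    have h2 : (ω / α) * t ^ α = ω * t ^ α / α := by ring
    rw [h1, h2]; field_simp
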